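/- arXiv:1203.2346 — 2 statements merged into one kernel-verified Lean document; each statement's English description precedes it below -/
import Mathlib

section
/- For every r ∈ ℕ and every birooted r-ball α⃗, the function f_A : Gr → ℕ given by f_A[G,o] = |{x ∈ N_G(o) : [G,o,x] ∈ A}|, where A = T_r(Gr⃗, α⃗), is Lipschitz with constant Δ·2^r on the ultrametric space (Gr, ρ); in particular it is continuous. -/
open MeasureTheory Filter Topology SimpleGraph ENNReal

/-- A rooted graph: a graph together with a distinguished root vertex. -/
structure RGraph : Type 1 where
  V : Type
  G : SimpleGraph V
  root : V

/-- Rooted graph isomorphism (equality of isomorphism classes). -/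
def RGraph.Equiv (X Y : RGraph) : Prop :=
  ∃ e : X.G ≃g Y.G, e X.root = Y.root

/-- The rooted ball of radius `r` around the root. -/
def RGraph.ball (X : RGraph) (r : ℕ) : RGraph where
  V := ↥{v : X.V | X.G.dist X.root v ≤ r}
  G := X.G.induce {v : X.V | X.G.dist X.root v ≤ r}
  root := ⟨X.root, by simp [SimpleGraph.dist_self]⟩

/-- `α` is a rooted `r`-ball: every vertex is within distance `r` of the root. -/
def RGraph.IsBall (α : RGraph) (r : ℕ) : Prop :=
  ∀ v : α.V, α.G.dist α.root v ≤ r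

/-- A rooted graph which is countable, connected and has all degrees `≤ Δ`. -/
structure PRGraph (Δ : ℕ) extends RGraph where
  countable : Countable V
  connected : G.Connected
  degbd : ∀ v : V, (G.neighborSet v).Finite ∧ (G.neighborSet v).ncard ≤ Δ

def rsetoid (Δ : ℕ) : Setoid (PRGraph Δ) where
  r X Y := X.toRGraph.Equiv Y.toRGraph
  iseqv := by
    constructor
    · intro X
      exact ⟨SimpleGraph.Iso.refl, rfl⟩
    · rintro X Y ⟨e, h⟩
      exact ⟨e.symm, by rw [← h]; exact e.symm_apply_apply _⟩
    · rintro X Y Z ⟨e, he⟩ ⟨f, hf⟩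
      exact ⟨e.trans f, by show f (e _) = _; rw [he, hf]⟩

/-- The space of isomorphism classes of countable connected rooted graphs with
degree bound `Δ`. -/
def Gr (Δ : ℕ) := Quotient (rsetoid Δ)

def mkG {Δ : ℕ} (X : PRGraph Δ) : Gr Δ := Quotient.mk (rsetoid Δ) X

open Classical in
/-- The ultrametric `ρ` on `Gr Δ`. -/
noncomputable def rdist {Δ : ℕ} (q₁ q₂ : Gr Δ) : ℝ :=
  if q₁ = q₂ then 0
  else (2 : ℝ) ^ (-((sSup {t : ℕ | ∃ X Y : PRGraph Δ, q₁ = mkG X ∧ q₂ = mkG Y ∧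
    (X.toRGraph.ball t).Equiv (Y.toRGraph.ball t)} : ℕ) : ℤ))

/-- The basic clopen set `T_r(Gr, α)` of classes whose `r`-ball is `α`. -/
def Tset (Δ r : ℕ) (α : RGraph) : Set (Gr Δ) :=
  {q | ∃ X : PRGraph Δ, q = mkG X ∧ (X.toRGraph.ball r).Equiv α}
/-- A birooted graph: a graph with an ordered pair of distinguished vertices. -/
structure BRGraph : Type 1 where
  V : Type
  G : SimpleGraph V
  root₁ : V
  root₂ : V

/-- Birooted graph isomorphism. -/
def BRGraph.Equiv (X Y : BRGraph) : Prop :=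
  ∃ e : X.G ≃g Y.G, e X.root₁ = Y.root₁ ∧ e X.root₂ = Y.root₂

/-- The birooted ball of radius `r` around the first root (always containing the
second root). -/
def BRGraph.ball (X : BRGraph) (r : ℕ) : BRGraph where
  V := ↥{v : X.V | X.G.dist X.root₁ v ≤ r ∨ v = X.root₂}
  G := X.G.induce {v : X.V | X.G.dist X.root₁ v ≤ r ∨ v = X.root₂}
  root₁ := ⟨X.root₁, Or.inl (by simp [SimpleGraph.dist_self])⟩
  root₂ := ⟨X.root₂, Or.inr rfl⟩

/-- `α` is a birooted `r`-ball: every vertex is within distance `r` of the first root. -/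
def BRGraph.IsBall (α : BRGraph) (r : ℕ) : Prop :=
  ∀ v : α.V, α.G.dist α.root₁ v ≤ r

/-- Swapping the two roots of a birooted graph. -/
def BRGraph.swap (X : BRGraph) : BRGraph := ⟨X.V, X.G, X.root₂, X.root₁⟩

/-- A birooted graph with adjacent roots which is countable, connected and has all
degrees `≤ Δ`. -/
structure BPRGraph (Δ : ℕ) where
  V : Type
  G : SimpleGraph V
  root₁ : V
  root₂ : V
  adj : G.Adj root₁ root₂
  countable : Countable V
  connected : G.Connected
  degbd : ∀ v : V, (G.neighborSet v).Finite ∧ (G.neighborSet v).ncard ≤ Δ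

def BPRGraph.toBR {Δ : ℕ} (X : BPRGraph Δ) : BRGraph := ⟨X.V, X.G, X.root₁, X.root₂⟩

def BPRGraph.swap {Δ : ℕ} (X : BPRGraph Δ) : BPRGraph Δ :=
  ⟨X.V, X.G, X.root₂, X.root₁, X.adj.symm, X.countable, X.connected, X.degbd⟩

def bsetoid (Δ : ℕ) : Setoid (BPRGraph Δ) where
  r X Y := X.toBR.Equiv Y.toBR
  iseqv := by
    constructor
    · intro X
      exact ⟨SimpleGraph.Iso.refl, rfl, rfl⟩
    · rintro X Y ⟨e, h₁, h₂⟩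
      exact ⟨e.symm, by rw [← h₁]; exact e.symm_apply_apply _,
        by rw [← h₂]; exact e.symm_apply_apply _⟩
    · rintro X Y Z ⟨e, he₁, he₂⟩ ⟨f, hf₁, hf₂⟩
      exact ⟨e.trans f, by show f (e _) = _; rw [he₁, hf₁],
        by show f (e _) = _; rw [he₂, hf₂]⟩

/-- The space of isomorphism classes of countable connected birooted graphs with
degree bound `Δ`. -/
def BGr (Δ : ℕ) := Quotient (bsetoid Δ)

def mkB {Δ : ℕ} (X : BPRGraph Δ) : BGr Δ := Quotient.mk (bsetoid Δ) X

open Classical in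
/-- The ultrametric `ρ⃗` on `BGr Δ`. -/
noncomputable def brdist {Δ : ℕ} (q₁ q₂ : BGr Δ) : ℝ :=
  if q₁ = q₂ then 0
  else (2 : ℝ) ^ (-((sSup {t : ℕ | ∃ X Y : BPRGraph Δ, q₁ = mkB X ∧ q₂ = mkB Y ∧
    (X.toBR.ball t).Equiv (Y.toBR.ball t)} : ℕ) : ℤ))

/-- The basic clopen set `T_r(Gr⃗, α⃗)` of birooted classes whose `r`-ball is `α⃗`. -/
def TsetB (Δ r : ℕ) (α : BRGraph) : Set (BGr Δ) :=
  {q | ∃ X : BPRGraph Δ, q = mkB X ∧ (X.toBR.ball r).Equiv α}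

/-- The root-swapping involution `ι` on `BGr Δ`. -/
def iota {Δ : ℕ} : BGr Δ → BGr Δ :=
  Quotient.map BPRGraph.swap (by
    rintro X Y ⟨e, h₁, h₂⟩
    exact ⟨e, h₂, h₁⟩)

/-- The birooted graph obtained from a rooted graph and a neighbour of the root. -/
def PRGraph.bi {Δ : ℕ} (X : PRGraph Δ) (x : X.V) (h : X.G.Adj X.root x) : BPRGraph Δ :=
  ⟨X.V, X.G, X.root, x, h, X.countable, X.connected, X.degbd⟩

/-- `f_A [G,o] = |{x ∈ N_G(o) : [G,o,x] ∈ A}|`, computed on the canonical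
representative of the class. -/
noncomputable def fA {Δ : ℕ} (A : Set (BGr Δ)) (q : Gr Δ) : ℕ :=
  Set.ncard {p : (Quotient.out q).G.neighborSet (Quotient.out q).root |
    mkB ((Quotient.out q).bi p.1 p.2) ∈ A}

/-- `[G,o] ↦ Σ_{x ∈ N_G(o)} F [G,o,x]`. -/
noncomputable def outSum {Δ : ℕ} (F : BGr Δ → ℝ≥0∞) (q : Gr Δ) : ℝ≥0∞ :=
  ∑' p : (Quotient.out q).G.neighborSet (Quotient.out q).root,
    F (mkB ((Quotient.out q).bi p.1 p.2))

/-- `[G,o] ↦ Σ_{x ∈ N_G(o)} F [G,x,o]`. -/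
noncomputable def inSum {Δ : ℕ} (F : BGr Δ → ℝ≥0∞) (q : Gr Δ) : ℝ≥0∞ :=
  ∑' p : (Quotient.out q).G.neighborSet (Quotient.out q).root,
    F (mkB (((Quotient.out q).bi p.1 p.2).swap))

/-- Unimodularity of a measure on `Gr Δ`. -/
def Unimodular {Δ : ℕ} [MeasurableSpace (Gr Δ)] [MeasurableSpace (BGr Δ)]
    (μ : Measure (Gr Δ)) : Prop :=
  ∀ F : BGr Δ → ℝ≥0∞, Measurable F →
    ∫⁻ q, inSum F q ∂μ = ∫⁻ q, outSum F q ∂μ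

/-- The kernel sending `[G,o]` to `Σ_{x ∈ N_G(o)} δ_{[G,o,x]}`. -/
noncomputable def edgeKer {Δ : ℕ} [MeasurableSpace (BGr Δ)] (q : Gr Δ) :
    Measure (BGr Δ) :=
  haveI : Countable (Quotient.out q).V := (Quotient.out q).countable
  Measure.sum (fun p : (Quotient.out q).G.neighborSet (Quotient.out q).root =>
    Measure.dirac (mkB ((Quotient.out q).bi p.1 p.2)))

/-- The edge measure `ν⃗` on `BGr Δ` associated to a measure `ν` on `Gr Δ`:
`ν⃗(A) = ∫ |{x ∈ N_G(o) : [G,o,x] ∈ A}| dν[G,o]`. -/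
noncomputable def vecM {Δ : ℕ} [MeasurableSpace (Gr Δ)] [MeasurableSpace (BGr Δ)]
    (ν : Measure (Gr Δ)) : Measure (BGr Δ) :=
  ν.bind edgeKer

/-- Weak convergence of a sequence of Borel measures. -/
def WeakConv {α : Type*} [TopologicalSpace α] [MeasurableSpace α]
    (μn : ℕ → Measure α) (μ : Measure α) : Prop :=
  ∀ f : α → ℝ, Continuous f →
    Tendsto (fun n => ∫ x, f x ∂(μn n)) atTop (𝓝 (∫ x, f x ∂μ))
/-- The connected component of `x` in a finite graph `G` with degree bound `Δ`,
viewed as a rooted graph with root `x`. -/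
noncomputable def compPR {V : Type} [Fintype V] (G : SimpleGraph V) {Δ : ℕ}
    (hdeg : ∀ v : V, (G.neighborSet v).ncard ≤ Δ) (x : V) : PRGraph Δ where
  V := ↥{y : V | G.Reachable x y}
  G := G.induce {y : V | G.Reachable x y}
  root := ⟨x, ⟨Walk.nil⟩⟩
  countable := by infer_instance
  connected := by
    classical
    apply SimpleGraph.induce_connected_of_patches x (by exact ⟨Walk.nil⟩)
    intro v hv
    obtain ⟨p⟩ := hv
    refine ⟨{w | w ∈ p.support}, ?_, p.start_mem_support, p.end_mem_support, ?_⟩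
    · intro w hw
      exact ⟨(p.takeUntil w hw)⟩
    · exact (p.connected_induce_support _ _)
  degbd := by
    intro v
    constructor
    · exact Set.toFinite _
    · have himg : Subtype.val '' ((G.induce {y : V | G.Reachable x y}).neighborSet v)
          ⊆ G.neighborSet v.1 := by
        rintro _ ⟨w, hw, rfl⟩
        exact hw
      calc ((G.induce {y : V | G.Reachable x y}).neighborSet v).ncard
          = (Subtype.val '' ((G.induce {y : V | G.Reachable x y}).neighborSet v)).ncard :=
            (Set.ncard_image_of_injective _ Subtype.val_injective).symm
        _ ≤ (G.neighborSet v.1).ncard := Set.ncard_le_ncard himg (Set.toFinite _)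
        _ ≤ Δ := hdeg v.1

/-- The law `Ψ(G)` of a finite graph `G`: the distribution of the rooted connected
component `[G_o, o]` of a uniformly random vertex `o`. -/
noncomputable def law {V : Type} [Fintype V] (G : SimpleGraph V) {Δ : ℕ}
    (hdeg : ∀ v : V, (G.neighborSet v).ncard ≤ Δ) [MeasurableSpace (Gr Δ)] :
    Measure (Gr Δ) :=
  (Fintype.card V : ℝ≥0∞)⁻¹ • ∑ x : V, Measure.dirac (mkG (compPR G hdeg x))

/-! ### Auxiliary lemmas for `fA_lipschitz` -/

section AuxLip

variable {V W : Type} {G : SimpleGraph V} {H : SimpleGraph W}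

lemma iso_dist_le (e : G ≃g H) (u v : V) : H.dist (e u) (e v) ≤ G.dist u v := by
  by_cases hr : G.Reachable u v
  · obtain ⟨p, hp⟩ := hr.exists_walk_length_eq_dist
    calc H.dist (e u) (e v) ≤ (p.map e.toHom).length := SimpleGraph.dist_le _
      _ = G.dist u v := by rw [SimpleGraph.Walk.length_map]; exact hp
  · have hnr : ¬ H.Reachable (e u) (e v) := fun h => hr (SimpleGraph.Iso.reachable_iff.mp h)
    rw [SimpleGraph.dist_eq_zero_iff_eq_or_not_reachable.mpr (Or.inr hnr)]
    exact Nat.zero_le _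

lemma iso_dist (e : G ≃g H) (u v : V) : H.dist (e u) (e v) = G.dist u v := by
  refine le_antisymm (iso_dist_le e u v) ?_
  have := iso_dist_le e.symm (e u) (e v)
  simpa using this

/-- Restriction of an isomorphism to induced subgraphs. -/
def isoInduce (e : G ≃g H) (A : Set V) (B : Set W) (h : ∀ v, v ∈ A ↔ e v ∈ B) :
    G.induce A ≃g H.induce B :=
  ⟨e.toEquiv.subtypeEquiv h, by intro a b; exact e.map_rel_iff⟩

lemma isoInduce_apply (e : G ≃g H) (A : Set V) (B : Set W) (h : ∀ v, v ∈ A ↔ e v ∈ B)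
    (a : A) : ((isoInduce e A B h a : ↥B) : W) = e (a : V) := rfl

lemma walk_lift {A : Set V} : ∀ {u v : V} (p : G.Walk u v),
    (∀ w ∈ p.support, w ∈ A) → ∀ (hu : u ∈ A) (hv : v ∈ A),
    ∃ q : (G.induce A).Walk ⟨u, hu⟩ ⟨v, hv⟩, q.length = p.length := by
  intro u v p
  induction p with
  | nil =>
    intro _ hu hv
    exact ⟨SimpleGraph.Walk.nil, rfl⟩
  | @cons u w v h p ih =>
    intro hp hu hv
    have hwA : w ∈ A := hp w (by simp)
    obtain ⟨q, hq⟩ := ih (fun x hx => hp x (by simp [hx])) hwA hv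
    exact ⟨SimpleGraph.Walk.cons (by exact h : (G.induce A).Adj ⟨u, hu⟩ ⟨w, hwA⟩) q,
      by show q.length + 1 = _; rw [hq]; rfl⟩

/-- The inclusion homomorphism from an induced subgraph. -/
def downHom (G : SimpleGraph V) (A : Set V) : G.induce A →g G :=
  ⟨Subtype.val, fun h => h⟩

lemma ball_walk (hc : G.Connected) (o : V) (s : ℕ) :
    ∀ (w : V) (hw : G.dist o w ≤ s),
    ∃ q : (G.induce {x | G.dist o x ≤ s}).Walk
        ⟨o, by simp [SimpleGraph.dist_self]⟩ ⟨w, hw⟩, q.length = G.dist o w := by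
  classical
  intro w hw
  obtain ⟨p, hp⟩ := hc.exists_walk_length_eq_dist o w
  have hsupp : ∀ x ∈ p.support, x ∈ {x | G.dist o x ≤ s} := by
    intro x hx
    calc G.dist o x ≤ (p.takeUntil x hx).length := SimpleGraph.dist_le _
      _ ≤ p.length := SimpleGraph.Walk.length_takeUntil_le p hx
      _ = G.dist o w := hp
      _ ≤ s := hw
  obtain ⟨q, hq⟩ := walk_lift p hsupp (by simp [SimpleGraph.dist_self]) hw
  exact ⟨q, hq.trans hp⟩

lemma ball_dist_iff (hc : G.Connected) (o v : V) {r s : ℕ} (hrs : r ≤ s)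
    (hv : G.dist o v ≤ s) :
    G.dist o v ≤ r ↔
      (G.induce {x | G.dist o x ≤ s}).dist ⟨o, by simp [SimpleGraph.dist_self]⟩ ⟨v, hv⟩ ≤ r := by
  constructor
  · intro h
    obtain ⟨q, hq⟩ := ball_walk hc o s v hv
    calc (G.induce {x | G.dist o x ≤ s}).dist ⟨o, by simp [SimpleGraph.dist_self]⟩ ⟨v, hv⟩
        ≤ q.length := SimpleGraph.dist_le _
      _ = G.dist o v := hq
      _ ≤ r := h
  · intro h
    have hreach : (G.induce {x | G.dist o x ≤ s}).Reachable ⟨o, by simp [SimpleGraph.dist_self]⟩ ⟨v, hv⟩ :=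
      (ball_walk hc o s v hv).elim fun q _ => ⟨q⟩
    obtain ⟨q, hq⟩ := hreach.exists_walk_length_eq_dist
    calc G.dist o v ≤ (q.map (downHom G _)).length := SimpleGraph.dist_le _
      _ = q.length := SimpleGraph.Walk.length_map _ q
      _ ≤ r := hq ▸ h

lemma RGraph.Equiv.symm' {X Y : RGraph} (h : X.Equiv Y) : Y.Equiv X := by
  obtain ⟨e, he⟩ := h
  exact ⟨e.symm, by rw [← he]; exact e.symm_apply_apply _⟩

lemma RGraph.Equiv.trans' {X Y Z : RGraph} (h : X.Equiv Y) (h' : Y.Equiv Z) : X.Equiv Z := by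
  obtain ⟨e, he⟩ := h
  obtain ⟨f, hf⟩ := h'
  exact ⟨e.trans f, by show f (e _) = _; rw [he, hf]⟩

lemma BRGraph.Equiv.symm' {X Y : BRGraph} (h : X.Equiv Y) : Y.Equiv X := by
  obtain ⟨e, h₁, h₂⟩ := h
  exact ⟨e.symm, by rw [← h₁]; exact e.symm_apply_apply _,
    by rw [← h₂]; exact e.symm_apply_apply _⟩

lemma BRGraph.Equiv.trans' {X Y Z : BRGraph} (h : X.Equiv Y) (h' : Y.Equiv Z) : X.Equiv Z := by
  obtain ⟨e, he₁, he₂⟩ := h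
  obtain ⟨f, hf₁, hf₂⟩ := h'
  exact ⟨e.trans f, by show f (e _) = _; rw [he₁, hf₁],
    by show f (e _) = _; rw [he₂, hf₂]⟩

lemma RGraph.Equiv.ball' {X Y : RGraph} (h : X.Equiv Y) (t : ℕ) :
    (X.ball t).Equiv (Y.ball t) := by
  obtain ⟨e, he⟩ := h
  have hmem : ∀ v, v ∈ {v : X.V | X.G.dist X.root v ≤ t} ↔
      e v ∈ {v : Y.V | Y.G.dist Y.root v ≤ t} := by
    intro v
    simp only [Set.mem_setOf_eq]
    rw [← he, iso_dist e]
  exact ⟨isoInduce e _ _ hmem, Subtype.ext he⟩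

lemma BRGraph.Equiv.ball' {X Y : BRGraph} (h : X.Equiv Y) (t : ℕ) :
    (X.ball t).Equiv (Y.ball t) := by
  obtain ⟨e, he₁, he₂⟩ := h
  have hmem : ∀ v, v ∈ {v : X.V | X.G.dist X.root₁ v ≤ t ∨ v = X.root₂} ↔
      e v ∈ {v : Y.V | Y.G.dist Y.root₁ v ≤ t ∨ v = Y.root₂} := by
    intro v
    simp only [Set.mem_setOf_eq]
    constructor
    · rintro (hd | rfl)
      · left; rw [← he₁, iso_dist e]; exact hd
      · right; exact he₂
    · rintro (hd | hv)
      · left; rw [← he₁, iso_dist e] at hd; exact hd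
      · right; apply e.injective; rw [hv, he₂]
  exact ⟨isoInduce e _ _ hmem, Subtype.ext he₁, Subtype.ext he₂⟩

lemma mem_TsetB_iff {Δ r : ℕ} {αb : BRGraph} {Z : BPRGraph Δ} :
    mkB Z ∈ TsetB Δ r αb ↔ (Z.toBR.ball r).Equiv αb := by
  constructor
  · rintro ⟨W, hW, hWb⟩
    have hZW : (bsetoid Δ).r Z W := Quotient.exact hW
    have : Z.toBR.Equiv W.toBR := hZW
    exact (this.ball' r).trans' hWb
  · intro h
    exact ⟨Z, rfl, h⟩

/-- Restriction of an isomorphism between induced subgraphs to smaller induced subgraphs. -/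
def restrictIso (G : SimpleGraph V) (H : SimpleGraph W) {T : Set V} {U : Set W}
    (e : G.induce T ≃g H.induce U) {A : Set V} {B : Set W}
    (hAT : A ⊆ T) (hBU : B ⊆ U)
    (h : ∀ v (hv : v ∈ T), v ∈ A ↔ ((e ⟨v, hv⟩ : ↥U) : W) ∈ B) :
    G.induce A ≃g H.induce B where
  toFun a := ⟨((e ⟨a.1, hAT a.2⟩ : ↥U) : W), (h a.1 (hAT a.2)).mp a.2⟩
  invFun b := ⟨((e.symm ⟨b.1, hBU b.2⟩ : ↥T) : V), by
    have hv := (e.symm ⟨b.1, hBU b.2⟩).2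
    refine (h _ hv).mpr ?_
    have : e ⟨((e.symm ⟨b.1, hBU b.2⟩ : ↥T) : V), hv⟩ = ⟨b.1, hBU b.2⟩ := by
      exact e.apply_symm_apply _
    rw [this]
    exact b.2⟩
  left_inv a := by
    apply Subtype.ext
    show ((e.symm ⟨((e ⟨a.1, hAT a.2⟩ : ↥U) : W), _⟩ : ↥T) : V) = a.1
    have : (⟨((e ⟨a.1, hAT a.2⟩ : ↥U) : W), _⟩ : ↥U) = e ⟨a.1, hAT a.2⟩ := rfl
    rw [this, e.symm_apply_apply]
  right_inv b := by
    apply Subtype.ext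
    show ((e ⟨((e.symm ⟨b.1, hBU b.2⟩ : ↥T) : V), _⟩ : ↥U) : W) = b.1
    have : (⟨((e.symm ⟨b.1, hBU b.2⟩ : ↥T) : V), _⟩ : ↥T) = e.symm ⟨b.1, hBU b.2⟩ := rfl
    rw [this, e.apply_symm_apply]
  map_rel_iff' := by intro a b; exact e.map_rel_iff

end AuxLip

section AuxLip2

lemma ball_equiv_mono {X Y : RGraph} (hX : X.G.Connected) (hY : Y.G.Connected)
    {t s : ℕ} (hts : t ≤ s) (h : (X.ball s).Equiv (Y.ball s)) :
    (X.ball t).Equiv (Y.ball t) := by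
  obtain ⟨e, he⟩ := h
  have hmem : ∀ v (hv : v ∈ {x : X.V | X.G.dist X.root x ≤ s}),
      v ∈ {x : X.V | X.G.dist X.root x ≤ t} ↔
        (e ⟨v, hv⟩).val ∈
          {x : Y.V | Y.G.dist Y.root x ≤ t} := by
    intro v hv
    have h1 := ball_dist_iff hX X.root v hts hv
    have h2 := ball_dist_iff hY Y.root
      (e ⟨v, hv⟩).val hts (e ⟨v, hv⟩).2
    have h3 := iso_dist e (X.ball s).root ⟨v, hv⟩
    rw [he] at h3
    constructor
    · intro hd; exact h2.mpr (h3.trans_le (h1.mp hd))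
    · intro hd; exact h1.mpr (h3.symm.trans_le (h2.mp hd))
  exact ⟨restrictIso X.G Y.G e (fun x hx => le_trans hx hts) (fun x hx => le_trans hx hts)
    hmem, by
      have hval : (e (X.ball s).root).val = Y.root := congrArg Subtype.val he
      apply Subtype.ext
      exact hval⟩

lemma bi_ball_equiv {Δ : ℕ} (r : ℕ) (X Y : PRGraph Δ)
    (h : (X.toRGraph.ball (r+1)).Equiv (Y.toRGraph.ball (r+1))) :
    ∃ φ : ↥(X.G.neighborSet X.root) ≃ ↥(Y.G.neighborSet Y.root),
      ∀ x : ↥(X.G.neighborSet X.root),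
        ((X.bi x.1 x.2).toBR.ball r).Equiv ((Y.bi (φ x).1 (φ x).2).toBR.ball r) := by
  obtain ⟨e, he⟩ := h
  have he' : e.symm (Y.toRGraph.ball (r+1)).root = (X.toRGraph.ball (r+1)).root := by
    rw [← he]; exact e.symm_apply_apply _
  have hadjT : ∀ v : X.V, X.G.Adj X.root v → X.G.dist X.root v ≤ r + 1 := by
    intro v hv
    calc X.G.dist X.root v ≤ (SimpleGraph.Walk.cons hv SimpleGraph.Walk.nil).length :=
          SimpleGraph.dist_le _
      _ = 1 := rfl
      _ ≤ r + 1 := by omega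
  have hadjU : ∀ v : Y.V, Y.G.Adj Y.root v → Y.G.dist Y.root v ≤ r + 1 := by
    intro v hv
    calc Y.G.dist Y.root v ≤ (SimpleGraph.Walk.cons hv SimpleGraph.Walk.nil).length :=
          SimpleGraph.dist_le _
      _ = 1 := rfl
      _ ≤ r + 1 := by omega
  have hdistiff : ∀ (v : X.V) (hv : X.G.dist X.root v ≤ r + 1),
      (X.G.dist X.root v ≤ r ↔
        Y.G.dist Y.root (e ⟨v, hv⟩).val ≤ r) := by
    intro v hv
    have h1 := ball_dist_iff X.connected X.root v (Nat.le_succ r) hv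
    have h2 := ball_dist_iff Y.connected Y.root
      (e ⟨v, hv⟩).val (Nat.le_succ r) (e ⟨v, hv⟩).2
    have h3 := iso_dist e (X.toRGraph.ball (r+1)).root ⟨v, hv⟩
    rw [he] at h3
    constructor
    · intro hd; exact h2.mpr (h3.trans_le (h1.mp hd))
    · intro hd; exact h1.mpr (h3.symm.trans_le (h2.mp hd))
  have fwd : ∀ x : ↥(X.G.neighborSet X.root),
      (e ⟨x.1, hadjT x.1 x.2⟩).val ∈
        Y.G.neighborSet Y.root := by
    intro x
    have h2 : (Y.toRGraph.ball (r+1)).G.Adj (e (X.toRGraph.ball (r+1)).root)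
        (e ⟨x.1, hadjT x.1 x.2⟩) := e.map_adj_iff.mpr x.2
    rw [he] at h2
    exact h2
  have bwd : ∀ y : ↥(Y.G.neighborSet Y.root),
      (e.symm ⟨y.1, hadjU y.1 y.2⟩).val ∈
        X.G.neighborSet X.root := by
    intro y
    have h2 : (X.toRGraph.ball (r+1)).G.Adj (e.symm (Y.toRGraph.ball (r+1)).root)
        (e.symm ⟨y.1, hadjU y.1 y.2⟩) := e.symm.map_adj_iff.mpr y.2
    rw [he'] at h2
    exact h2
  refine ⟨⟨fun x => ⟨_, fwd x⟩, fun y => ⟨_, bwd y⟩,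
    fun x => by
      apply Subtype.ext
      show (e.symm (e ⟨x.1, hadjT x.1 x.2⟩)).val = x.1
      exact congrArg Subtype.val (e.symm_apply_apply _),
    fun y => by
      apply Subtype.ext
      show (e (e.symm ⟨y.1, hadjU y.1 y.2⟩)).val = y.1
      exact congrArg Subtype.val (e.apply_symm_apply _)⟩,
    ?_⟩
  intro x
  have hAT : {v : X.V | X.G.dist X.root v ≤ r ∨ v = x.1} ⊆
      {v : X.V | X.G.dist X.root v ≤ r + 1} := by
    rintro v (hd | rfl)
    · exact le_trans hd (Nat.le_succ r)
    · exact hadjT x.1 x.2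
  have hBU : {v : Y.V | Y.G.dist Y.root v ≤ r ∨
        v = (e ⟨x.1, hadjT x.1 x.2⟩).val} ⊆
      {v : Y.V | Y.G.dist Y.root v ≤ r + 1} := by
    rintro v (hd | rfl)
    · exact le_trans hd (Nat.le_succ r)
    · exact hadjU _ (fwd x)
  have hmem : ∀ v (hv : v ∈ {w : X.V | X.G.dist X.root w ≤ r + 1}),
      v ∈ {v : X.V | X.G.dist X.root v ≤ r ∨ v = x.1} ↔
        (e ⟨v, hv⟩).val ∈
          {v : Y.V | Y.G.dist Y.root v ≤ r ∨
            v = (e ⟨x.1, hadjT x.1 x.2⟩).val} := by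
    intro v hv
    constructor
    · rintro (hd | rfl)
      · exact Or.inl ((hdistiff v hv).mp hd)
      · exact Or.inr rfl
    · rintro (hd | hv2)
      · exact Or.inl ((hdistiff v hv).mpr hd)
      · refine Or.inr ?_
        have : (⟨v, hv⟩ : ↥{w : X.V | X.G.dist X.root w ≤ r + 1}) = ⟨x.1, hadjT x.1 x.2⟩ :=
          e.injective (Subtype.ext hv2)
        exact congrArg Subtype.val this
  refine ⟨restrictIso X.G Y.G e hAT hBU hmem, ?_, ?_⟩
  · have hval : (e (X.toRGraph.ball (r+1)).root).val = Y.root := congrArg Subtype.val he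
    apply Subtype.ext
    exact hval
  · apply Subtype.ext
    rfl

lemma fA_count_eq {Δ : ℕ} (r : ℕ) (αb : BRGraph) (X Y : PRGraph Δ)
    (h : (X.toRGraph.ball (r+1)).Equiv (Y.toRGraph.ball (r+1))) :
    {p : ↥(X.G.neighborSet X.root) | mkB (X.bi p.1 p.2) ∈ TsetB Δ r αb}.ncard =
    {p : ↥(Y.G.neighborSet Y.root) | mkB (Y.bi p.1 p.2) ∈ TsetB Δ r αb}.ncard := by
  obtain ⟨φ, hφ⟩ := bi_ball_equiv r X Y h
  rw [← Nat.card_coe_set_eq, ← Nat.card_coe_set_eq]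
  apply Nat.card_congr
  refine φ.subtypeEquiv ?_
  intro x
  simp only [Set.mem_setOf_eq]
  rw [mem_TsetB_iff, mem_TsetB_iff]
  exact ⟨fun hx => ((hφ x).symm').trans' hx, fun hx => (hφ x).trans' hx⟩

end AuxLip2

/-- For `A = T_r(Gr⃗, α⃗)`, the neighbour-counting function `f_A` is Lipschitz
with constant `Δ · 2^r` on `(Gr, ρ)`. -/
theorem fA_lipschitz (Δ : ℕ) [MetricSpace (Gr Δ)]
    (hdist : ∀ a b : Gr Δ, dist a b = rdist a b)
    (r : ℕ) (αb : BRGraph) (hα : αb.IsBall r) :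
    ∀ q₁ q₂ : Gr Δ,
      |(fA (TsetB Δ r αb) q₁ : ℝ) - (fA (TsetB Δ r αb) q₂ : ℝ)|
        ≤ (Δ : ℝ) * 2 ^ r * dist q₁ q₂ := by
  intro q₁ q₂
  by_cases hq : q₁ = q₂
  · subst hq
    rw [hdist, rdist, if_pos rfl]
    simp
  · rw [hdist q₁ q₂]
    unfold rdist
    rw [if_neg hq]
    set S : Set ℕ := {t : ℕ | ∃ X Y : PRGraph Δ, q₁ = mkG X ∧ q₂ = mkG Y ∧
      (X.toRGraph.ball t).Equiv (Y.toRGraph.ball t)} with hS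
    set s : ℕ := sSup S with hs
    have hfin : ∀ q : Gr Δ, fA (TsetB Δ r αb) q ≤ Δ := by
      intro q
      have hfin1 : ((Quotient.out q).G.neighborSet (Quotient.out q).root).Finite :=
        ((Quotient.out q).degbd _).1
      haveI := hfin1.to_subtype
      calc fA (TsetB Δ r αb) q
          ≤ (Set.univ : Set ↥((Quotient.out q).G.neighborSet (Quotient.out q).root)).ncard :=
            Set.ncard_le_ncard (Set.subset_univ _) Set.finite_univ
        _ = Nat.card ↥((Quotient.out q).G.neighborSet (Quotient.out q).root) :=
            Set.ncard_univ _
        _ = ((Quotient.out q).G.neighborSet (Quotient.out q).root).ncard :=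
            Nat.card_coe_set_eq _
        _ ≤ Δ := ((Quotient.out q).degbd _).2
    by_cases hsr : s ≤ r
    · have a1 : (fA (TsetB Δ r αb) q₁ : ℝ) ≤ Δ := by exact_mod_cast hfin q₁
      have a2 : (fA (TsetB Δ r αb) q₂ : ℝ) ≤ Δ := by exact_mod_cast hfin q₂
      have b1 : (0:ℝ) ≤ (fA (TsetB Δ r αb) q₁ : ℝ) := Nat.cast_nonneg _
      have b2 : (0:ℝ) ≤ (fA (TsetB Δ r αb) q₂ : ℝ) := Nat.cast_nonneg _
      have h1 : |(fA (TsetB Δ r αb) q₁ : ℝ) - (fA (TsetB Δ r αb) q₂ : ℝ)| ≤ (Δ : ℝ) := by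
        rw [abs_sub_le_iff]
        constructor <;> linarith
      have h2 : (1:ℝ) ≤ 2 ^ r * 2 ^ (-(s:ℤ)) := by
        have heq : (2:ℝ) ^ r * 2 ^ (-(s:ℤ)) = 2 ^ ((r:ℤ) + (-(s:ℤ))) := by
          rw [zpow_add₀ (by norm_num : (2:ℝ) ≠ 0), zpow_natCast]
        rw [heq]
        apply one_le_zpow₀ (by norm_num : (1:ℝ) ≤ 2)
        omega
      calc |(fA (TsetB Δ r αb) q₁ : ℝ) - (fA (TsetB Δ r αb) q₂ : ℝ)|
          ≤ (Δ : ℝ) := h1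
        _ = Δ * 1 := (mul_one _).symm
        _ ≤ Δ * (2 ^ r * 2 ^ (-(s:ℤ))) := mul_le_mul_of_nonneg_left h2 (Nat.cast_nonneg _)
        _ = Δ * 2 ^ r * 2 ^ (-(s:ℤ)) := (mul_assoc _ _ _).symm
    · push_neg at hsr
      have hmem : s ∈ S := by
        rw [hs]
        apply Nat.sSup_mem
        · rcases Set.eq_empty_or_nonempty S with hne | hne
          · exfalso
            have h0 : s = 0 := by rw [hs, hne, csSup_empty]; rfl
            omega
          · exact hne
        · by_contra hnb
          have h0 : s = 0 := by rw [hs, csSup_of_not_bddAbove hnb, csSup_empty]; rfl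
          omega
      obtain ⟨X, Y, hX, hY, hb⟩ := hmem
      have e₁ : (rsetoid Δ).r (Quotient.out q₁) X :=
        Quotient.exact ((Quotient.out_eq q₁).trans hX)
      have e₂ : (rsetoid Δ).r (Quotient.out q₂) Y :=
        Quotient.exact ((Quotient.out_eq q₂).trans hY)
      have e₁' : (Quotient.out q₁).toRGraph.Equiv X.toRGraph := e₁
      have e₂' : (Quotient.out q₂).toRGraph.Equiv Y.toRGraph := e₂
      have hb₁ : ((Quotient.out q₁).toRGraph.ball s).Equiv
          ((Quotient.out q₂).toRGraph.ball s) :=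
        ((RGraph.Equiv.ball' e₁' s).trans' hb).trans' ((RGraph.Equiv.ball' e₂' s).symm')
      have hb₂ := ball_equiv_mono (Quotient.out q₁).connected (Quotient.out q₂).connected
        (by omega : r + 1 ≤ s) hb₁
      have heq : fA (TsetB Δ r αb) q₁ = fA (TsetB Δ r αb) q₂ :=
        fA_count_eq r αb _ _ hb₂
      rw [heq, sub_self, abs_zero]
      positivity
end

section
/- Let X be a standard Borel space with a Borel probability measure μ, E a countable Borel equivalence relation on X, and define measures M(A) = ∫ |{y : (x,y) ∈ A}| dμ(x) and M'(A) = ∫ |{y : (y,x) ∈ A}| dμ(x) on Borel subsets A ⊆ E. If M = M', then μ is E-invariant, i.e. for every Borel bijection f : A → B between Borel subsets of X with graph contained in E, μ(A) = μ(B). -/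
open MeasureTheory

/-- Let `E` be a countable Borel equivalence relation on a standard Borel space `X`
with probability measure `μ`, and let `M`, `M'` be the left and right counting
measures of `E` over `μ`.  If `M = M'` on Borel subsets of `E`, then `μ` is
`E`-invariant: every Borel bijection `f : A → B` with graph contained in `E`
satisfies `μ(A) = μ(B)`. -/
theorem measure_invariant_of_mass_transport
    {X : Type*} [MeasurableSpace X] [StandardBorelSpace X]
    (μ : Measure X) [IsProbabilityMeasure μ]
    (E : Set (X × X)) (hEmeas : MeasurableSet E)
    (hEeq : Equivalence (fun x y : X => (x, y) ∈ E))
    (hEcount : ∀ x : X, {y : X | (x, y) ∈ E}.Countable)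
    (hMM' : ∀ A : Set (X × X), A ⊆ E → MeasurableSet A →
      ∫⁻ x, (∑' _ : {y : X | (x, y) ∈ A}, (1 : ENNReal)) ∂μ
        = ∫⁻ x, (∑' _ : {y : X | (y, x) ∈ A}, (1 : ENNReal)) ∂μ) :
    ∀ (A B : Set X), MeasurableSet A → MeasurableSet B →
      ∀ f : A → B, Measurable f → Function.Bijective f →
        (∀ a : A, ((a : X), (f a : X)) ∈ E) → μ A = μ B := by
  intro A B hA hB f hf hbij hgr
  haveI : StandardBorelSpace A := hA.standardBorel
  -- the graph of f as a subset of X × X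
  set g : A → X × X := fun a => ((a : X), (f a : X)) with hg
  have hginj : Function.Injective g := by
    intro a b hab
    exact Subtype.ext (congrArg Prod.fst hab)
  have hgmeas : Measurable g :=
    Measurable.prodMk measurable_subtype_coe (measurable_subtype_coe.comp hf)
  have hemb : MeasurableEmbedding g := hgmeas.measurableEmbedding hginj
  set G : Set (X × X) := Set.range g with hG
  have hGmeas : MeasurableSet G := by
    rw [hG, ← Set.image_univ]
    exact hemb.measurableSet_image' MeasurableSet.univ
  have hGE : G ⊆ E := by
    rintro ⟨x, y⟩ ⟨a, ha⟩
    rw [← ha]; exact hgr a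
  have key := hMM' G hGE hGmeas
  -- left integral equals μ A
  have hleft : ∫⁻ x, (∑' _ : {y : X | (x, y) ∈ G}, (1 : ENNReal)) ∂μ = μ A := by
    rw [← lintegral_indicator_one hA]
    refine lintegral_congr fun x => ?_
    by_cases hx : x ∈ A
    · have : {y : X | (x, y) ∈ G} = {(f ⟨x, hx⟩ : X)} := by
        ext y
        constructor
        · rintro ⟨a, ha⟩
          have hax : (a : X) = x := congrArg Prod.fst ha
          have : a = ⟨x, hx⟩ := Subtype.ext hax
          subst this
          exact (congrArg Prod.snd ha).symm
        · rintro rfl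
          exact ⟨⟨x, hx⟩, rfl⟩
      rw [this, Set.indicator_of_mem hx]
      simp [tsum_singleton]
    · have : {y : X | (x, y) ∈ G} = (∅ : Set X) := by
        ext y
        simp only [Set.mem_setOf_eq, Set.mem_empty_iff_false, iff_false]
        rintro ⟨a, ha⟩
        have : (a : X) = x := congrArg Prod.fst ha
        exact hx (this ▸ a.2)
      rw [this, Set.indicator_of_notMem hx]
      simp
  -- right integral equals μ B
  have hright : ∫⁻ x, (∑' _ : {y : X | (y, x) ∈ G}, (1 : ENNReal)) ∂μ = μ B := by
    rw [← lintegral_indicator_one hB]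
    refine lintegral_congr fun x => ?_
    by_cases hx : x ∈ B
    · obtain ⟨a, ha⟩ := hbij.surjective ⟨x, hx⟩
      have : {y : X | (y, x) ∈ G} = {(a : X)} := by
        ext y
        constructor
        · rintro ⟨b, hb⟩
          have hbx : (f b : X) = x := congrArg Prod.snd hb
          have : f b = f a := by rw [ha]; exact Subtype.ext hbx
          have hba : b = a := hbij.injective this
          subst hba
          exact (congrArg Prod.fst hb).symm
        · rintro rfl
          exact ⟨a, by rw [hg]; simp [ha]⟩
      rw [this, Set.indicator_of_mem hx]
      simp [tsum_singleton]
    · have : {y : X | (y, x) ∈ G} = (∅ : Set X) := by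
        ext y
        simp only [Set.mem_setOf_eq, Set.mem_empty_iff_false, iff_false]
        rintro ⟨a, ha⟩
        have : (f a : X) = x := congrArg Prod.snd ha
        exact hx (this ▸ (f a).2)
      rw [this, Set.indicator_of_notMem hx]
      simp
  rw [← hleft, ← hright]
  exact key
end
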